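/- arXiv:2302.08160 — 2 statements merged into one kernel-verified Lean document; each statement's English description precedes it below -/
import Mathlib

section
/- A feature i ∈ F belongs to some AXp if and only if it belongs to some CXp; hence a feature is irrelevant if and only if it occurs neither in any AXp nor in any CXp. -/
/-- The set of points agreeing with `v` on all features in `S`. -/
def upsilon {m : ℕ} (v : Fin m → Bool) (S : Finset (Fin m)) : Set (Fin m → Bool) :=
  {x | ∀ i ∈ S, x i = v i}

/-- Weak abductive explanation: fixing the features in `S` to their values in `v`
forces the prediction to remain `κ v`. -/
def WAXp {m : ℕ} (κ : (Fin m → Bool) → Bool) (v : Fin m → Bool) (S : Finset (Fin m)) : Prop :=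
  ∀ x ∈ upsilon v S, κ x = κ v

/-- Abductive explanation: a subset-minimal weak AXp. -/
def AXp {m : ℕ} (κ : (Fin m → Bool) → Bool) (v : Fin m → Bool) (S : Finset (Fin m)) : Prop :=
  WAXp κ v S ∧ ∀ T ⊂ S, ¬ WAXp κ v T

/-- Weak contrastive explanation: freeing the features in `S` (fixing all others
to their values in `v`) allows the prediction to change. -/
def WCXp {m : ℕ} (κ : (Fin m → Bool) → Bool) (v : Fin m → Bool) (S : Finset (Fin m)) : Prop :=
  ∃ x : Fin m → Bool, (∀ i ∉ S, x i = v i) ∧ κ x ≠ κ v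

/-- Contrastive explanation: a subset-minimal weak CXp. -/
def CXp {m : ℕ} (κ : (Fin m → Bool) → Bool) (v : Fin m → Bool) (S : Finset (Fin m)) : Prop :=
  WCXp κ v S ∧ ∀ T ⊂ S, ¬ WCXp κ v T

/-- A feature is relevant if it belongs to some AXp. -/
def Relevant {m : ℕ} (κ : (Fin m → Bool) → Bool) (v : Fin m → Bool) (i : Fin m) : Prop :=
  ∃ S, AXp κ v S ∧ i ∈ S

/-- The sufficiency function `σ`: `σ s = true` iff fixing exactly the features
selected by `s` to their values in `v` forces the prediction `κ v` everywhere. -/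
def sigmaFn {m : ℕ} (κ : (Fin m → Bool) → Bool) (v : Fin m → Bool) (s : Fin m → Bool) : Bool :=
  decide (∀ x : Fin m → Bool, (∀ i : Fin m, s i = true → x i = v i) → κ x = κ v)

/-- Average value of the classifier over the points agreeing with `v` on `S`. -/
def phi {m : ℕ} (κ : (Fin m → Bool) → Bool) (v : Fin m → Bool) (S : Finset (Fin m)) : ℚ :=
  (1 / 2 ^ (m - S.card)) *
    ∑ x ∈ Finset.univ.filter (fun x : Fin m → Bool => ∀ i ∈ S, x i = v i),
      (if κ x = true then (1 : ℚ) else 0)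

/-- The Shapley value of feature `i` for the instance `(v, κ v)`. -/
def Sv {m : ℕ} (κ : (Fin m → Bool) → Bool) (v : Fin m → Bool) (i : Fin m) : ℚ :=
  ∑ S ∈ (Finset.univ.erase i).powerset,
    ((S.card.factorial : ℚ) * ((m - S.card - 1).factorial : ℚ) / (m.factorial : ℚ)) *
      (phi κ v (insert i S) - phi κ v S)

lemma exists_min_subset {m : ℕ} (P : Finset (Fin m) → Prop) (D : Finset (Fin m)) (h : P D) :
    ∃ T ⊆ D, P T ∧ ∀ T' ⊂ T, ¬ P T' := by
  classical
  induction D using Finset.strongInductionOn with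
  | _ D ih =>
    by_cases hmin : ∀ T' ⊂ D, ¬ P T'
    · exact ⟨D, le_refl _, h, hmin⟩
    · push_neg at hmin
      obtain ⟨T', hT', hP⟩ := hmin
      obtain ⟨T, hTD, hPT, hmin⟩ := ih T' hT' hP
      exact ⟨T, hTD.trans hT'.subset, hPT, hmin⟩

theorem stmt7 {m : ℕ} (hm : 1 ≤ m) (κ : (Fin m → Bool) → Bool) (v : Fin m → Bool)
    (i : Fin m) :
    ((∃ S, AXp κ v S ∧ i ∈ S) ↔ (∃ S, CXp κ v S ∧ i ∈ S)) ∧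
    (¬ Relevant κ v i ↔
      (¬ (∃ S, AXp κ v S ∧ i ∈ S) ∧ ¬ (∃ S, CXp κ v S ∧ i ∈ S))) := by
  classical
  have main : (∃ S, AXp κ v S ∧ i ∈ S) ↔ (∃ S, CXp κ v S ∧ i ∈ S) := by
    constructor
    · rintro ⟨S, ⟨hW, hMin⟩, hiS⟩
      have hnW : ¬ WAXp κ v (S.erase i) := hMin _ (Finset.erase_ssubset hiS)
      simp only [WAXp, upsilon, Set.mem_setOf_eq, not_forall] at hnW
      obtain ⟨x, hx, hxne⟩ := hnW
      set D : Finset (Fin m) := Finset.univ.filter (fun j => x j ≠ v j) with hD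
      have hWC : WCXp κ v D := by
        refine ⟨x, fun j hj => ?_, hxne⟩
        by_contra hne
        exact hj (by simp [hD, hne])
      obtain ⟨T, hTD, hPT, hmin⟩ := exists_min_subset (WCXp κ v) D hWC
      refine ⟨T, ⟨hPT, hmin⟩, ?_⟩
      by_contra hiT
      obtain ⟨y, hy, hyne⟩ := hPT
      apply hyne
      apply hW
      intro j hjS
      have hjT : j ∉ T := by
        intro hjT
        have hjD := hTD hjT
        simp only [hD, Finset.mem_filter, Finset.mem_univ, true_and] at hjD
        rcases eq_or_ne j i with rfl | hji
        · exact hiT hjT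
        · exact hjD (hx j (Finset.mem_erase.mpr ⟨hji, hjS⟩))
      exact hy j hjT
    · rintro ⟨S, ⟨hW, hMin⟩, hiS⟩
      have hnC : ¬ WCXp κ v (S.erase i) := hMin _ (Finset.erase_ssubset hiS)
      set A : Finset (Fin m) := (S.erase i)ᶜ with hA
      have hWA : WAXp κ v A := by
        intro x hx
        by_contra hne
        exact hnC ⟨x, fun j hj => hx j (Finset.mem_compl.mpr hj), hne⟩
      obtain ⟨T, hTA, hPT, hmin⟩ := exists_min_subset (WAXp κ v) A hWA
      refine ⟨T, ⟨hPT, hmin⟩, ?_⟩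
      by_contra hiT
      obtain ⟨x, hx, hxne⟩ := hW
      apply hxne
      apply hPT
      intro j hjT
      have hjA := hTA hjT
      simp only [hA, Finset.mem_compl, Finset.mem_erase, not_and] at hjA
      have hji : j ≠ i := fun h => hiT (h ▸ hjT)
      exact hx j (fun hjS => (hjA hji) hjS)
  refine ⟨main, ?_⟩
  constructor
  · intro h
    exact ⟨h, fun hc => h (main.mpr hc)⟩
  · intro h
    exact h.1
end

section
/- Let m = 4, κ_1(x_1,x_2,x_3,x_4) = x_1 ∧ ((¬x_2 ∧ x_3 ∧ x_4) ∨ (x_2 ∧ ¬x_3 ∧ ¬x_4)), and v = (1,0,0,0), so c = κ_1(v) = 0. Then feature 1 is irrelevant (belongs to no AXp) while feature 4 is relevant (belongs to some AXp), yet Sv(1) = 1/12 ≠ 0 and Sv(4) = 0 (issue I4: an irrelevant feature gets nonzero Shapley importance while a relevant feature gets zero). -/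
/-- The classifier κ₁(x₁,x₂,x₃,x₄) = x₁ ∧ ((¬x₂ ∧ x₃ ∧ x₄) ∨ (x₂ ∧ ¬x₃ ∧ ¬x₄))
(features are 0-indexed). -/
def kappa1 : (Fin 4 → Bool) → Bool := fun x =>
  x 0 && ((!(x 1) && x 2 && x 3) || (x 1 && !(x 2) && !(x 3)))

/-- The point v = (1,0,0,0). -/
def v1000 : Fin 4 → Bool := ![true, false, false, false]


instance instDecUps {m} (v : Fin m → Bool) (S : Finset (Fin m)) (x : Fin m → Bool) :
    Decidable (x ∈ upsilon v S) :=
  inferInstanceAs (Decidable (∀ i ∈ S, x i = v i))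
instance instDecWAXp {m} (κ : (Fin m → Bool) → Bool) (v : Fin m → Bool) (S : Finset (Fin m)) :
    Decidable (WAXp κ v S) :=
  inferInstanceAs (Decidable (∀ x ∈ upsilon v S, κ x = κ v))
instance instDecAXp {m} (κ : (Fin m → Bool) → Bool) (v : Fin m → Bool) (S : Finset (Fin m)) :
    Decidable (AXp κ v S) := instDecidableAnd
instance instDecRel {m} (κ : (Fin m → Bool) → Bool) (v : Fin m → Bool) (i : Fin m) :
    Decidable (Relevant κ v i) := Fintype.decidableExistsFintype

lemma phi_eq {m : ℕ} (κ : (Fin m → Bool) → Bool) (v : Fin m → Bool) (S : Finset (Fin m)) :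
    phi κ v S =
      ((Finset.univ.filter (fun x : Fin m → Bool => (∀ i ∈ S, x i = v i) ∧ κ x = true)).card : ℚ)
        / 2 ^ (m - S.card) := by
  rw [phi, Finset.sum_boole, Finset.filter_filter]
  ring

lemma sv0 : Sv kappa1 v1000 0 = 1/12 := by
  rw [Sv, show (Finset.univ.erase (0:Fin 4)).powerset =
     ({∅, {1}, {2}, {3}, {1,2}, {1,3}, {2,3}, {1,2,3}} : Finset (Finset (Fin 4))) from by decide]
  rw [Finset.sum_insert (by decide), Finset.sum_insert (by decide), Finset.sum_insert (by decide),
      Finset.sum_insert (by decide), Finset.sum_insert (by decide), Finset.sum_insert (by decide),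
      Finset.sum_insert (by decide), Finset.sum_singleton]
  simp only [phi_eq]
  norm_num [Nat.factorial,
    show (Finset.filter (fun x : Fin 4 → Bool => kappa1 x = true) Finset.univ).card = 2 from by decide,
    show (Finset.filter (fun x : Fin 4 → Bool => x 0 = v1000 0 ∧ kappa1 x = true) Finset.univ).card = 2 from by decide,
    show (Finset.filter (fun x : Fin 4 → Bool => x 1 = v1000 1 ∧ kappa1 x = true) Finset.univ).card = 1 from by decide,
    show (Finset.filter (fun x : Fin 4 → Bool => (x 0 = v1000 0 ∧ x 1 = v1000 1) ∧ kappa1 x = true) Finset.univ).card = 1 from by decide,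
    show ({0,1} : Finset (Fin 4)).card = 2 from by decide,
    show ({1} : Finset (Fin 4)).card = 1 from by decide,
    show (Finset.filter (fun x : Fin 4 → Bool => x 2 = v1000 2 ∧ kappa1 x = true) Finset.univ).card = 1 from by decide,
    show (Finset.filter (fun x : Fin 4 → Bool => (x 0 = v1000 0 ∧ x 2 = v1000 2) ∧ kappa1 x = true) Finset.univ).card = 1 from by decide,
    show ({0,2} : Finset (Fin 4)).card = 2 from by decide,
    show ({2} : Finset (Fin 4)).card = 1 from by decide,
    show (Finset.filter (fun x : Fin 4 → Bool => x 3 = v1000 3 ∧ kappa1 x = true) Finset.univ).card = 1 from by decide,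
    show (Finset.filter (fun x : Fin 4 → Bool => (x 0 = v1000 0 ∧ x 3 = v1000 3) ∧ kappa1 x = true) Finset.univ).card = 1 from by decide,
    show ({0,3} : Finset (Fin 4)).card = 2 from by decide,
    show ({3} : Finset (Fin 4)).card = 1 from by decide,
    show (Finset.filter (fun x : Fin 4 → Bool => (x 1 = v1000 1 ∧ x 2 = v1000 2) ∧ kappa1 x = true) Finset.univ).card = 0 from by decide,
    show (Finset.filter (fun x : Fin 4 → Bool => (x 0 = v1000 0 ∧ x 1 = v1000 1 ∧ x 2 = v1000 2) ∧ kappa1 x = true) Finset.univ).card = 0 from by decide,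
    show ({0,1,2} : Finset (Fin 4)).card = 3 from by decide,
    show ({1,2} : Finset (Fin 4)).card = 2 from by decide,
    show (Finset.filter (fun x : Fin 4 → Bool => (x 1 = v1000 1 ∧ x 3 = v1000 3) ∧ kappa1 x = true) Finset.univ).card = 0 from by decide,
    show (Finset.filter (fun x : Fin 4 → Bool => (x 0 = v1000 0 ∧ x 1 = v1000 1 ∧ x 3 = v1000 3) ∧ kappa1 x = true) Finset.univ).card = 0 from by decide,
    show ({0,1,3} : Finset (Fin 4)).card = 3 from by decide,
    show ({1,3} : Finset (Fin 4)).card = 2 from by decide,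
    show (Finset.filter (fun x : Fin 4 → Bool => (x 2 = v1000 2 ∧ x 3 = v1000 3) ∧ kappa1 x = true) Finset.univ).card = 1 from by decide,
    show (Finset.filter (fun x : Fin 4 → Bool => (x 0 = v1000 0 ∧ x 2 = v1000 2 ∧ x 3 = v1000 3) ∧ kappa1 x = true) Finset.univ).card = 1 from by decide,
    show ({0,2,3} : Finset (Fin 4)).card = 3 from by decide,
    show ({2,3} : Finset (Fin 4)).card = 2 from by decide,
    show (Finset.filter (fun x : Fin 4 → Bool => (x 1 = v1000 1 ∧ x 2 = v1000 2 ∧ x 3 = v1000 3) ∧ kappa1 x = true) Finset.univ).card = 0 from by decide,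
    show (Finset.filter (fun x : Fin 4 → Bool => (x 0 = v1000 0 ∧ x 1 = v1000 1 ∧ x 2 = v1000 2 ∧ x 3 = v1000 3) ∧ kappa1 x = true) Finset.univ).card = 0 from by decide,
    show ({0,1,2,3} : Finset (Fin 4)).card = 4 from by decide,
    show ({1,2,3} : Finset (Fin 4)).card = 3 from by decide]

lemma sv3 : Sv kappa1 v1000 3 = 0 := by
  rw [Sv, show (Finset.univ.erase (3:Fin 4)).powerset =
     ({∅, {0}, {1}, {2}, {0,1}, {0,2}, {1,2}, {0,1,2}} : Finset (Finset (Fin 4))) from by decide]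
  rw [Finset.sum_insert (by decide), Finset.sum_insert (by decide), Finset.sum_insert (by decide),
      Finset.sum_insert (by decide), Finset.sum_insert (by decide), Finset.sum_insert (by decide),
      Finset.sum_insert (by decide), Finset.sum_singleton]
  simp only [phi_eq]
  norm_num [Nat.factorial,
    show (Finset.filter (fun x : Fin 4 → Bool => kappa1 x = true) Finset.univ).card = 2 from by decide,
    show (Finset.filter (fun x : Fin 4 → Bool => x 3 = v1000 3 ∧ kappa1 x = true) Finset.univ).card = 1 from by decide,
    show (Finset.filter (fun x : Fin 4 → Bool => x 0 = v1000 0 ∧ kappa1 x = true) Finset.univ).card = 2 from by decide,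
    show (Finset.filter (fun x : Fin 4 → Bool => (x 3 = v1000 3 ∧ x 0 = v1000 0) ∧ kappa1 x = true) Finset.univ).card = 1 from by decide,
    show ({3,0} : Finset (Fin 4)).card = 2 from by decide,
    show ({0} : Finset (Fin 4)).card = 1 from by decide,
    show (Finset.filter (fun x : Fin 4 → Bool => x 1 = v1000 1 ∧ kappa1 x = true) Finset.univ).card = 1 from by decide,
    show (Finset.filter (fun x : Fin 4 → Bool => (x 3 = v1000 3 ∧ x 1 = v1000 1) ∧ kappa1 x = true) Finset.univ).card = 0 from by decide,
    show ({3,1} : Finset (Fin 4)).card = 2 from by decide,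
    show ({1} : Finset (Fin 4)).card = 1 from by decide,
    show (Finset.filter (fun x : Fin 4 → Bool => x 2 = v1000 2 ∧ kappa1 x = true) Finset.univ).card = 1 from by decide,
    show (Finset.filter (fun x : Fin 4 → Bool => (x 3 = v1000 3 ∧ x 2 = v1000 2) ∧ kappa1 x = true) Finset.univ).card = 1 from by decide,
    show ({3,2} : Finset (Fin 4)).card = 2 from by decide,
    show ({2} : Finset (Fin 4)).card = 1 from by decide,
    show (Finset.filter (fun x : Fin 4 → Bool => (x 0 = v1000 0 ∧ x 1 = v1000 1) ∧ kappa1 x = true) Finset.univ).card = 1 from by decide,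
    show (Finset.filter (fun x : Fin 4 → Bool => (x 3 = v1000 3 ∧ x 0 = v1000 0 ∧ x 1 = v1000 1) ∧ kappa1 x = true) Finset.univ).card = 0 from by decide,
    show ({3,0,1} : Finset (Fin 4)).card = 3 from by decide,
    show ({0,1} : Finset (Fin 4)).card = 2 from by decide,
    show (Finset.filter (fun x : Fin 4 → Bool => (x 0 = v1000 0 ∧ x 2 = v1000 2) ∧ kappa1 x = true) Finset.univ).card = 1 from by decide,
    show (Finset.filter (fun x : Fin 4 → Bool => (x 3 = v1000 3 ∧ x 0 = v1000 0 ∧ x 2 = v1000 2) ∧ kappa1 x = true) Finset.univ).card = 1 from by decide,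
    show ({3,0,2} : Finset (Fin 4)).card = 3 from by decide,
    show ({0,2} : Finset (Fin 4)).card = 2 from by decide,
    show (Finset.filter (fun x : Fin 4 → Bool => (x 1 = v1000 1 ∧ x 2 = v1000 2) ∧ kappa1 x = true) Finset.univ).card = 0 from by decide,
    show (Finset.filter (fun x : Fin 4 → Bool => (x 3 = v1000 3 ∧ x 1 = v1000 1 ∧ x 2 = v1000 2) ∧ kappa1 x = true) Finset.univ).card = 0 from by decide,
    show ({3,1,2} : Finset (Fin 4)).card = 3 from by decide,
    show ({1,2} : Finset (Fin 4)).card = 2 from by decide,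
    show (Finset.filter (fun x : Fin 4 → Bool => (x 0 = v1000 0 ∧ x 1 = v1000 1 ∧ x 2 = v1000 2) ∧ kappa1 x = true) Finset.univ).card = 0 from by decide,
    show (Finset.filter (fun x : Fin 4 → Bool => (x 3 = v1000 3 ∧ x 0 = v1000 0 ∧ x 1 = v1000 1 ∧ x 2 = v1000 2) ∧ kappa1 x = true) Finset.univ).card = 0 from by decide,
    show ({3,0,1,2} : Finset (Fin 4)).card = 4 from by decide,
    show ({0,1,2} : Finset (Fin 4)).card = 3 from by decide]

theorem stmt13 :
    kappa1 v1000 = false ∧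
    ¬ Relevant kappa1 v1000 0 ∧
    Relevant kappa1 v1000 3 ∧
    Sv kappa1 v1000 0 = 1 / 12 ∧
    Sv kappa1 v1000 0 ≠ 0 ∧
    Sv kappa1 v1000 3 = 0 := by
  refine ⟨by decide, by decide, by decide, sv0, by rw [sv0]; norm_num, sv3⟩
end
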